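/- Let τ be a de Bruijn sequence of order k over the alphabet Γ = Σ^m (each letter of Γ is a word of length m over Σ). Then the word over Σ obtained from τ by replacing each letter of Γ by the corresponding length-m word over Σ is an m-shift de Bruijn sequence of order k·m over Σ. -/

import Mathlib

/-- `w` is an `m`-shift de Bruijn sequence of order `n`: every word of length `n`
appears exactly once in `w` as a factor starting at a position `i*m` (0-indexed). -/
def IsMSdB {α : Type*} (m n : ℕ) (w : List α) : Prop :=
  ∀ u : List α, u.length = n → ∃! i : ℕ, i * m + n ≤ w.length ∧ (w.drop (i * m)).take n = u

/-- `t` is an (ordinary) de Bruijn sequence of order `k` over the alphabet `β`: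
every word of length `k` over `β` appears exactly once in `t` as a factor. -/
def IsDeBruijn {β : Type*} (k : ℕ) (t : List β) : Prop :=
  ∀ u : List β, u.length = k → ∃! i : ℕ, i + k ≤ t.length ∧ (t.drop i).take k = u

lemma len_join {α : Type*} {m : ℕ} (A : List {w : List α // w.length = m}) :
    ((A.map Subtype.val).flatten).length = A.length * m := by
  induction A with
  | nil => simp
  | cons a A ih =>
    simp only [List.map_cons, List.flatten_cons, List.length_append, a.2, ih, List.length_cons]
    ring

lemma drop_join {α : Type*} {m : ℕ} (i : ℕ) (A : List {w : List α // w.length = m}) :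
    ((A.map Subtype.val).flatten).drop (i * m) = ((A.drop i).map Subtype.val).flatten := by
  induction A generalizing i with
  | nil => simp
  | cons a A ih =>
    cases i with
    | zero => simp
    | succ i =>
      simp only [List.map_cons, List.flatten_cons, List.drop_succ_cons]
      have h2 : (i + 1) * m = a.val.length + i * m := by rw [a.2]; ring
      rw [h2, List.drop_length_add_append, ih]

lemma take_join {α : Type*} {m : ℕ} (k : ℕ) (A : List {w : List α // w.length = m})
    (h : k ≤ A.length) :
    ((A.map Subtype.val).flatten).take (k * m) = ((A.take k).map Subtype.val).flatten := by
  induction k generalizing A with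
  | zero => simp
  | succ k ih =>
    cases A with
    | nil => simp at h
    | cons a A =>
      have h2 : (k + 1) * m = a.val.length + k * m := by rw [a.2]; ring
      simp only [List.map_cons, List.flatten_cons, List.take_succ_cons]
      rw [h2, List.take_length_add_append, ih A (by simpa using h)]

lemma join_inj {α : Type*} {m : ℕ} (A B : List {w : List α // w.length = m})
    (hAB : A.length = B.length)
    (h : (A.map Subtype.val).flatten = (B.map Subtype.val).flatten) : A = B := by
  induction A generalizing B with
  | nil => cases B with
    | nil => rfl
    | cons b B => simp at hAB
  | cons a A ih =>
    cases B with
    | nil => simp at hAB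
    | cons b B =>
      simp only [List.map_cons, List.flatten_cons] at h
      have hl : a.val.length = b.val.length := by rw [a.2, b.2]
      have hval : a.val = b.val := by
        have t1 := List.take_left (l₁ := a.val) (l₂ := (A.map Subtype.val).flatten)
        have t2 := List.take_left (l₁ := b.val) (l₂ := (B.map Subtype.val).flatten)
        rw [← t1, ← t2, hl, h]
      have hjoin : (A.map Subtype.val).flatten = (B.map Subtype.val).flatten := by
        have t1 := List.drop_left (l₁ := a.val) (l₂ := (A.map Subtype.val).flatten)
        have t2 := List.drop_left (l₁ := b.val) (l₂ := (B.map Subtype.val).flatten)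
        rw [← t1, hl, h, t2]
      rw [Subtype.ext hval, ih B (by simpa using hAB) hjoin]

lemma exists_chunk {α : Type*} {m : ℕ} (hm : 1 ≤ m) (k : ℕ) (u : List α)
    (hu : u.length = k * m) :
    ∃ A : List {w : List α // w.length = m}, A.length = k ∧ (A.map Subtype.val).flatten = u := by
  induction k generalizing u with
  | zero =>
    have : u = [] := List.length_eq_zero_iff.mp (by omega)
    exact ⟨[], rfl, by simp [this]⟩
  | succ k ih =>
    have hu' : u.length = k * m + m := by rw [hu]; ring
    have hmle : m ≤ u.length := by omega
    have hta : (u.take m).length = m := by rw [List.length_take]; omega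
    have hda : (u.drop m).length = k * m := by rw [List.length_drop]; omega
    obtain ⟨A, hA1, hA2⟩ := ih (u.drop m) hda
    refine ⟨⟨u.take m, hta⟩ :: A, by simp [hA1], ?_⟩
    simp only [List.map_cons, List.flatten_cons, hA2]
    exact List.take_append_drop m u

/-- Replacing each letter of a de Bruijn sequence of order `k` over the alphabet
`Σ^m` by the corresponding word of length `m` over `Σ` yields an `m`-shift
de Bruijn sequence of order `k·m` over `Σ`. -/
theorem stmt16 {α : Type*} (m k : ℕ) (hm : 1 ≤ m) (hk : 1 ≤ k)
    (τ : List {w : List α // w.length = m}) (hτ : IsDeBruijn k τ) :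
    IsMSdB m (k * m) ((τ.map Subtype.val).flatten) := by
  intro u hu
  obtain ⟨U, hUlen, hUjoin⟩ := exists_chunk hm k u hu
  have key : ∀ i : ℕ,
      (i * m + k * m ≤ ((τ.map Subtype.val).flatten).length ∧
        (((τ.map Subtype.val).flatten).drop (i * m)).take (k * m) = u) ↔
      (i + k ≤ τ.length ∧ (τ.drop i).take k = U) := by
    intro i
    rw [len_join]
    have hlen : i * m + k * m ≤ τ.length * m ↔ i + k ≤ τ.length := by
      constructor
      · intro h
        have h' : (i + k) * m ≤ τ.length * m := by nlinarith
        exact Nat.le_of_mul_le_mul_right h' (by omega)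
      · intro h; nlinarith
    constructor
    · rintro ⟨h1, h2⟩
      have hik : i + k ≤ τ.length := hlen.mp h1
      have hkd : k ≤ (τ.drop i).length := by rw [List.length_drop]; omega
      rw [drop_join, take_join k _ hkd] at h2
      have hlen2 : ((τ.drop i).take k).length = U.length := by
        rw [List.length_take, List.length_drop, hUlen]; omega
      exact ⟨hik, join_inj _ _ hlen2 (h2.trans hUjoin.symm)⟩
    · rintro ⟨h1, h2⟩
      have hkd : k ≤ (τ.drop i).length := by rw [List.length_drop]; omega
      exact ⟨hlen.mpr h1, by rw [drop_join, take_join k _ hkd, h2, hUjoin]⟩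
  exact (existsUnique_congr key).mpr (hτ U hUlen)
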